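/- Let Γ be a connected finite simplicial graph that is not a join, let S₁ be a subset of the vertex set of Γ, and let H be a conjugate of the special subgroup of G_Γ generated by S₁. Then the following are equivalent: (1) S₁ contains at least two non-adjacent vertices and the distance in Γ between any two distinct elements of S₁ is different from 2; (2) H is join-free; (3) H is star-free. Moreover, a subgroup H satisfying these conditions is virtually free. -/

import Mathlib

open scoped Pointwise ENNReal

namespace RACGPaper

/-- The defining relations of the right-angled Coxeter group of a simple graph. -/
def racgRels {V : Type*} (Γ : SimpleGraph V) : Set (FreeGroup V) :=
  {r | (∃ v : V, r = FreeGroup.of v * FreeGroup.of v) ∨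
       (∃ v w : V, Γ.Adj v w ∧ r = (FreeGroup.of v * FreeGroup.of w) ^ 2)}

/-- The right-angled Coxeter group of a simple graph. -/
def RACG {V : Type*} (Γ : SimpleGraph V) : Type _ := PresentedGroup (racgRels Γ)

instance {V : Type*} (Γ : SimpleGraph V) : Group (RACG Γ) :=
  inferInstanceAs (Group (PresentedGroup (racgRels Γ)))

/-- The generator of `RACG Γ` corresponding to a vertex. -/
def gen {V : Type*} (Γ : SimpleGraph V) (v : V) : RACG Γ := PresentedGroup.of v

/-- Word length with respect to the vertex generators (which are involutions). -/
noncomputable def len {V : Type*} (Γ : SimpleGraph V) (g : RACG Γ) : ℕ :=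
  sInf {n | ∃ l : List V, l.length = n ∧ (l.map (gen Γ)).prod = g}

/-- The word metric on `RACG Γ`. -/
noncomputable def wdist {V : Type*} (Γ : SimpleGraph V) (g h : RACG Γ) : ℕ :=
  len Γ (g⁻¹ * h)

/-- Distance from a point to a subgroup. -/
noncomputable def distH {V : Type*} (Γ : SimpleGraph V) (H : Subgroup (RACG Γ))
    (x : RACG Γ) : ℕ :=
  sInf {n | ∃ h ∈ H, wdist Γ x h = n}

/-- A `(K, C)`-quasi-geodesic defined on the integer interval `[a, b]`. -/
def IsQuasiGeodesic {V : Type*} (Γ : SimpleGraph V) (K C : ℝ) (a b : ℤ)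
    (γ : ℤ → RACG Γ) : Prop :=
  ∀ i ∈ Set.Icc a b, ∀ j ∈ Set.Icc a b,
    |(i : ℝ) - (j : ℝ)| / K - C ≤ (wdist Γ (γ i) (γ j) : ℝ) ∧
    (wdist Γ (γ i) (γ j) : ℝ) ≤ K * |(i : ℝ) - (j : ℝ)| + C

/-- A subgroup is strongly quasiconvex if every quasi-geodesic with endpoints on it
stays uniformly close to it. -/
def StronglyQuasiconvex {V : Type*} (Γ : SimpleGraph V) (H : Subgroup (RACG Γ)) : Prop :=
  ∀ K C : ℝ, 1 ≤ K → 0 ≤ C → ∃ M : ℝ, 0 ≤ M ∧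
    ∀ (a b : ℤ) (γ : ℤ → RACG Γ), IsQuasiGeodesic Γ K C a b γ →
      γ a ∈ H → γ b ∈ H → ∀ i ∈ Set.Icc a b, (distH Γ H (γ i) : ℝ) ≤ M

/-- `H` is malnormal: `gHg⁻¹ ∩ H = {1}` for every `g ∉ H`. -/
def Malnormal {G : Type*} [Group G] (H : Subgroup G) : Prop :=
  ∀ g : G, g ∉ H → ∀ x : G, x ∈ H → g⁻¹ * x * g ∈ H → x = 1

/-- `H` is almost malnormal: `gHg⁻¹ ∩ H` is finite for every `g ∉ H`. -/
def AlmostMalnormal {G : Type*} [Group G] (H : Subgroup G) : Prop :=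
  ∀ g : G, g ∉ H → {x : G | x ∈ H ∧ g⁻¹ * x * g ∈ H}.Finite

/-- An almost malnormal collection of subgroups. -/
def AlmostMalnormalColl {G : Type*} [Group G] (𝓗 : Set (Subgroup G)) : Prop :=
  ∀ H ∈ 𝓗, ∀ H' ∈ 𝓗, ∀ g : G,
    {x : G | x ∈ H ∧ g⁻¹ * x * g ∈ (H' : Subgroup G)}.Infinite → H = H' ∧ g ∈ H

/-- A group is virtually free if it has a free subgroup of finite index. -/
def VirtuallyFree (G : Type*) [Group G] : Prop :=
  ∃ F : Subgroup G, F.FiniteIndex ∧ IsFreeGroup F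

/-- A set of vertices spans a join subgraph. -/
def IsJoin {V : Type*} (Γ : SimpleGraph V) (J : Set V) : Prop :=
  ∃ V₁ V₂ : Set V, V₁.Nonempty ∧ V₂.Nonempty ∧ Disjoint V₁ V₂ ∧ V₁ ∪ V₂ = J ∧
    ∀ v ∈ V₁, ∀ w ∈ V₂, Γ.Adj v w

/-- The special subgroup generated by a set of vertices. -/
def special {V : Type*} (Γ : SimpleGraph V) (S₁ : Set V) : Subgroup (RACG Γ) :=
  Subgroup.closure (gen Γ '' S₁)

/-- The conjugate subgroup `gHg⁻¹`. -/
def conjSubgroup {G : Type*} [Group G] (g : G) (H : Subgroup G) : Subgroup G :=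
  H.map (MulAut.conj g).toMonoidHom

/-- `x` lies in some join subgroup of `RACG Γ`. -/
def InJoinSubgroup {V : Type*} (Γ : SimpleGraph V) (x : RACG Γ) : Prop :=
  ∃ J : Set V, IsJoin Γ J ∧ x ∈ special Γ J

/-- An infinite subgroup is join-free if none of its infinite-order elements is
conjugate into a join subgroup. -/
def JoinFree {V : Type*} (Γ : SimpleGraph V) (H : Subgroup (RACG Γ)) : Prop :=
  (H : Set (RACG Γ)).Infinite ∧
    ∀ h ∈ H, ¬ IsOfFinOrder h → ∀ g : RACG Γ, ¬ InJoinSubgroup Γ (g * h * g⁻¹)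

/-- The star of a vertex: the vertex together with its neighbours. -/
def starSet {V : Type*} (Γ : SimpleGraph V) (v : V) : Set V :=
  {v} ∪ {w | Γ.Adj v w}

/-- `x` lies in some star subgroup of `RACG Γ`. -/
def InStarSubgroup {V : Type*} (Γ : SimpleGraph V) (x : RACG Γ) : Prop :=
  ∃ v : V, x ∈ special Γ (starSet Γ v)

/-- An infinite subgroup is star-free if none of its infinite-order elements is
conjugate into a star subgroup. -/
def StarFree {V : Type*} (Γ : SimpleGraph V) (H : Subgroup (RACG Γ)) : Prop :=
  (H : Set (RACG Γ)).Infinite ∧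
    ∀ h ∈ H, ¬ IsOfFinOrder h → ∀ g : RACG Γ, ¬ InStarSubgroup Γ (g * h * g⁻¹)

/-- Word length with respect to a (symmetrized) set `T` of group elements. -/
noncomputable def wlen {G : Type*} [Group G] (T : Set G) (g : G) : ℕ :=
  sInf {n | ∃ l : List G, (∀ x ∈ l, x ∈ T ∨ x⁻¹ ∈ T) ∧ l.length = n ∧ l.prod = g}

/-- A finitely generated subgroup of `RACG Γ` is undistorted if the inclusion is a
quasi-isometric embedding with respect to word metrics. -/
def Undistorted {V : Type*} (Γ : SimpleGraph V) (H : Subgroup (RACG Γ)) : Prop :=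
  ∃ T : Finset (RACG Γ), (T : Set (RACG Γ)) ⊆ (H : Set (RACG Γ)) ∧
    Subgroup.closure (T : Set (RACG Γ)) = H ∧
    ∃ K C : ℝ, 1 ≤ K ∧ 0 ≤ C ∧ ∀ h ∈ H,
      (wlen (T : Set (RACG Γ)) h : ℝ) / K - C ≤ (len Γ h : ℝ) ∧
      (len Γ h : ℝ) ≤ K * (wlen (T : Set (RACG Γ)) h : ℝ) + C

/-- A subgroup is stable if it is undistorted and quasi-geodesics with common
endpoints on it uniformly fellow-travel. -/
def Stable {V : Type*} (Γ : SimpleGraph V) (H : Subgroup (RACG Γ)) : Prop :=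
  Undistorted Γ H ∧ ∀ K C : ℝ, 1 ≤ K → 0 ≤ C → ∃ M : ℝ, 0 ≤ M ∧
    ∀ (a b a' b' : ℤ) (γ γ' : ℤ → RACG Γ),
      IsQuasiGeodesic Γ K C a b γ → IsQuasiGeodesic Γ K C a' b' γ' →
      γ a = γ' a' → γ b = γ' b' → γ a ∈ H → γ b ∈ H →
      (∀ i ∈ Set.Icc a b, ∃ j ∈ Set.Icc a' b', (wdist Γ (γ i) (γ' j) : ℝ) ≤ M) ∧
      (∀ j ∈ Set.Icc a' b', ∃ i ∈ Set.Icc a b, (wdist Γ (γ i) (γ' j) : ℝ) ≤ M)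

/-- `H` is `N`-join-busting: every join subword of a reduced word representing an
element of `H` has length at most `N`. -/
def JoinBusting {V : Type*} (Γ : SimpleGraph V) (H : Subgroup (RACG Γ)) (N : ℕ) : Prop :=
  ∀ h ∈ H, ∀ w : List V, (w.map (gen Γ)).prod = h → w.length = len Γ h →
    ∀ β : List V, β <:+: w → InJoinSubgroup Γ (β.map (gen Γ)).prod → β.length ≤ N

/-- `a b c d` is an induced four-cycle (in this cyclic order), with diagonals
`(a, c)` and `(b, d)`. -/
def IsInducedFourCycle {V : Type*} (Γ : SimpleGraph V) (a b c d : V) : Prop :=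
  a ≠ c ∧ b ≠ d ∧ ¬ Γ.Adj a c ∧ ¬ Γ.Adj b d ∧
    Γ.Adj a b ∧ Γ.Adj b c ∧ Γ.Adj c d ∧ Γ.Adj d a

/-- A set of vertices is the vertex set of an induced four-cycle. -/
def IsFourCycleSet {V : Type*} (Γ : SimpleGraph V) (Q : Set V) : Prop :=
  ∃ a b c d : V, Q = {a, b, c, d} ∧ IsInducedFourCycle Γ a b c d

/-- The four-cycle graph `Γ⁴`: vertices are induced four-cycles of `Γ`, adjacent
when they share a pair of non-adjacent vertices. -/
def fourCycleGraph {V : Type*} (Γ : SimpleGraph V) :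
    SimpleGraph {Q : Set V // IsFourCycleSet Γ Q} :=
  SimpleGraph.fromRel (fun Q Q' => ∃ u v : V, u ≠ v ∧ ¬ Γ.Adj u v ∧
    u ∈ (Q : Set V) ∩ (Q' : Set V) ∧ v ∈ (Q : Set V) ∩ (Q' : Set V))

/-- A connected component of `Γ⁴` whose support is the whole vertex set of `Γ`. -/
def FullSupportComponent {V : Type*} (Γ : SimpleGraph V)
    (C : (fourCycleGraph Γ).ConnectedComponent) : Prop :=
  ∀ v : V, ∃ Q : {Q : Set V // IsFourCycleSet Γ Q},
    (fourCycleGraph Γ).connectedComponentMk Q = C ∧ v ∈ (Q : Set V)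

/-- `Γ` is CFS: some component of `Γ⁴` has full support. -/
def CFS {V : Type*} (Γ : SimpleGraph V) : Prop :=
  ∃ C : (fourCycleGraph Γ).ConnectedComponent, FullSupportComponent Γ C

/-- Length (number of edges) of a shortest edge path from `x` to `y` in the Cayley
graph all of whose vertices are at distance at least `c` from `H`. -/
noncomputable def avoidDist {V : Type*} (Γ : SimpleGraph V) (H : Subgroup (RACG Γ))
    (c : ℝ) (x y : RACG Γ) : ℝ≥0∞ :=
  ⨅ (l : List (RACG Γ)) (_ : l.head? = some x) (_ : l.getLast? = some y)
    (_ : l.Chain' fun a b => wdist Γ a b = 1)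
    (_ : ∀ z ∈ l, c ≤ (distH Γ H z : ℝ)), ((l.length - 1 : ℕ) : ℝ≥0∞)

/-- The subgroup divergence functions `σⁿ_ρ` of `H` in `RACG Γ`. -/
noncomputable def divFun {V : Type*} (Γ : SimpleGraph V) (H : Subgroup (RACG Γ))
    (ρ : ℝ) (n : ℕ) (r : ℝ) : ℝ≥0∞ :=
  ⨅ (x : RACG Γ) (y : RACG Γ) (_ : (distH Γ H x : ℝ) = r)
    (_ : (distH Γ H y : ℝ) = r) (_ : avoidDist Γ H r x y ≠ ⊤)
    (_ : (n : ℝ) * r ≤ (wdist Γ x y : ℝ)), avoidDist Γ H (ρ * r) x y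

/-- Domination of functions: `f(x) ≤ A g(Bx) + Cx` for large `x`. -/
def FunDom (f g : ℝ → ℝ≥0∞) : Prop :=
  ∃ A B C D : ℝ, 0 < A ∧ 0 < B ∧ 0 < C ∧ 0 < D ∧
    ∀ x : ℝ, D < x → f x ≤ ENNReal.ofReal A * g (B * x) + ENNReal.ofReal (C * x)

/-- Domination of families of divergence functions. -/
def FamDom (δ δ' : ℝ → ℕ → ℝ → ℝ≥0∞) : Prop :=
  ∃ L : ℝ, L ∈ Set.Ioc (0 : ℝ) 1 ∧ ∃ M : ℕ, 0 < M ∧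
    ∀ ρ ∈ Set.Ioc (0 : ℝ) 1, ∀ n : ℕ, 2 ≤ n → FunDom (δ (L * ρ) n) (δ' ρ (M * n))

/-- A family of divergence functions is equivalent to a single function. -/
def FamEquivFun (δ : ℝ → ℕ → ℝ → ℝ≥0∞) (f : ℝ → ℝ≥0∞) : Prop :=
  FamDom δ (fun _ _ => f) ∧ FamDom (fun _ _ => f) δ

/-- Height at most `n`: any `n+1` pairwise distinct cosets give conjugates with
finite total intersection. -/
def HeightAtMost {G : Type*} [Group G] (H : Subgroup G) (n : ℕ) : Prop :=
  ∀ f : Fin (n + 1) → G, (∀ i j, i ≠ j → (f i)⁻¹ * f j ∉ H) →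
    {x : G | ∀ i, (f i)⁻¹ * x * f i ∈ H}.Finite

/-- `H` has finite height in `G`. -/
def FiniteHeight {G : Type*} [Group G] (H : Subgroup G) : Prop :=
  ∃ n : ℕ, HeightAtMost H n

end RACGPaper



open RACGPaper

namespace RACGAux


lemma isOfFinOrder_conj {G : Type*} [Group G] (a : G) {x : G}
    (hx : IsOfFinOrder x) : IsOfFinOrder (a * x * a⁻¹) := by
  have := (MulAut.conj a).toMonoidHom.isOfFinOrder hx
  simpa using this

lemma isOfFinOrder_of_conj {G : Type*} [Group G] (a : G) {x : G}
    (hx : IsOfFinOrder (a * x * a⁻¹)) : IsOfFinOrder x := by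
  have := isOfFinOrder_conj a⁻¹ hx
  simpa [mul_assoc] using this

/-- Virtual freeness is inherited along injections. -/
lemma vfree_of_injective {G₁ G₂ : Type*} [Group G₁] [Group G₂] (f : G₁ →* G₂)
    (hf : Function.Injective f)
    (h : ∃ F : Subgroup G₂, F.FiniteIndex ∧ IsFreeGroup F) :
    ∃ F : Subgroup G₁, F.FiniteIndex ∧ IsFreeGroup F := by
  obtain ⟨F₂, hidx, hfree⟩ := h
  refine ⟨F₂.comap f, ?_, ?_⟩
  · haveI := hidx
    haveI : Finite (G₂ ⧸ F₂) := Subgroup.finite_quotient_of_finiteIndex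
    have hcompat : ∀ a b : G₁, (QuotientGroup.leftRel (F₂.comap f)) a b →
        ((f a : G₂) : G₂ ⧸ F₂) = ((f b : G₂) : G₂ ⧸ F₂) := by
      intro a b hab
      rw [QuotientGroup.leftRel_apply] at hab
      rw [QuotientGroup.eq]
      simpa using hab
    set φ : G₁ ⧸ F₂.comap f → G₂ ⧸ F₂ := Quotient.lift _ hcompat with hφ
    have hinj : Function.Injective φ := by
      intro a b
      induction a using QuotientGroup.induction_on
      induction b using QuotientGroup.induction_on
      rename_i a b
      intro hab
      have h1 : ((f a : G₂) : G₂ ⧸ F₂) = ((f b : G₂) : G₂ ⧸ F₂) := hab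
      rw [QuotientGroup.eq] at h1
      apply QuotientGroup.eq.mpr
      rw [Subgroup.mem_comap]
      simpa using h1
    haveI : Finite (G₁ ⧸ F₂.comap f) := Finite.of_injective φ hinj
    exact Subgroup.finiteIndex_of_finite_quotient
  · haveI := hfree
    have hmem : ∀ x : ↥(F₂.comap f), f ((F₂.comap f).subtype x) ∈ F₂ := fun x => x.2
    set t : ↥(F₂.comap f) →* ↥F₂ :=
      (f.comp (F₂.comap f).subtype).codRestrict F₂ hmem with ht
    have hinj : Function.Injective t := by
      intro a b hab
      apply Subtype.ext
      apply hf
      have := congrArg (Subtype.val) hab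
      simpa [ht] using this
    have e := MonoidHom.ofInjective hinj
    exact ((IsFreeGroup.basis t.range).map e.symm).isFreeGroup



open Monoid.CoprodI Monoid

set_option linter.unusedSectionVars false

variable {ι : Type*} {W : Type*} [Group W] [DecidableEq ι] [DecidableEq W]

/-- The inclusion of the `i`-th copy of `W` in the free product of copies of `W`. -/
abbrev ofc (i : ι) (x : W) : CoprodI (fun _ : ι => W) :=
  CoprodI.of (M := fun _ : ι => W) (i := i) x

/-- The fold homomorphism sending each copy of `W` identically to `W`. -/
def fold (ι : Type*) (W : Type*) [Group W] : CoprodI (fun _ : ι => W) →* W :=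
  CoprodI.lift fun _ => MonoidHom.id W

@[simp] lemma fold_of {i : ι} (x : W) : fold ι W (ofc i x) = x := by
  simp [fold, ofc]

/-- The candidate free generators of the kernel of `fold`. -/
def bgen (i₀ j : ι) (x : W) : CoprodI (fun _ : ι => W) :=
  ofc j x * (ofc i₀ x)⁻¹

@[simp] lemma fold_bgen {i₀ j : ι} (x : W) : fold ι W (bgen i₀ j x) = 1 := by
  simp [bgen]

/-! ### Word computations -/

lemma toList_of_smul (i : ι) (m : W) (w : Word (fun _ : ι => W)) (h1 : m ≠ 1)
    (hw : w.fstIdx ≠ some i) :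
    ((ofc i m) • w).toList = ⟨i, m⟩ :: w.toList := by
  rw [← Word.cons_eq_smul (m := m) (ls := w) (h1 := hw) (h2 := h1)]
  rfl

lemma exists_tail (w : Word (fun _ : ι => W)) (i : ι) (y : W) (t : List (Σ _ : ι, W))
    (h : w.toList = ⟨i, y⟩ :: t) :
    ∃ w' : Word (fun _ : ι => W), w'.toList = t ∧ w'.fstIdx ≠ some i ∧
      w = (ofc i y) • w' := by
  have hne : ∀ l ∈ t, Sigma.snd l ≠ 1 := by
    intro l hl
    exact w.ne_one l (by rw [h]; exact List.mem_cons_of_mem _ hl)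
  have hch : t.Chain' fun l l' => Sigma.fst l ≠ Sigma.fst l' := by
    have := w.chain_ne
    rw [h] at this
    exact this.tail
  have hfst : Word.fstIdx (⟨t, hne, hch⟩ : Word (fun _ : ι => W)) ≠ some i := by
    have := w.chain_ne
    rw [h] at this
    cases t with
    | nil => simp [Word.fstIdx]
    | cons l t' =>
      have hrel : (⟨i, y⟩ : Σ _ : ι, W).fst ≠ l.fst := (List.isChain_cons_cons.mp this).1
      simp only [Word.fstIdx, List.head?]
      intro hc
      exact hrel (by simpa using hc.symm)
  have hy : y ≠ 1 := w.ne_one ⟨i, y⟩ (by rw [h]; exact List.mem_cons_self)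
  refine ⟨⟨t, hne, hch⟩, rfl, hfst, ?_⟩
  rw [← Word.cons_eq_smul (m := y) (ls := ⟨t, hne, hch⟩) (h1 := hfst) (h2 := hy)]
  apply Word.ext
  simpa using h

/-- Multiplication with merge of first letters. -/
lemma toList_of_smul_merge (i : ι) (m y : W) (w : Word (fun _ : ι => W))
    (t : List (Σ _ : ι, W)) (h : w.toList = ⟨i, y⟩ :: t) (hmy : m * y ≠ 1) :
    ((ofc i m) • w).toList = ⟨i, m * y⟩ :: t := by
  obtain ⟨w', hw't, hw'f, rfl⟩ := exists_tail w i y t h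
  rw [← mul_smul, ← map_mul]
  rw [toList_of_smul i (m * y) w' hmy hw'f, hw't]

/-- Multiplication with full cancellation of first letters. -/
lemma of_smul_cancel (i : ι) (m y : W) (w : Word (fun _ : ι => W))
    (t : List (Σ _ : ι, W)) (h : w.toList = ⟨i, y⟩ :: t) (hmy : m * y = 1) :
    ∃ w' : Word (fun _ : ι => W), w'.toList = t ∧ w'.fstIdx ≠ some i ∧
      (ofc i m) • w = w' := by
  obtain ⟨w', hw't, hw'f, rfl⟩ := exists_tail w i y t h
  refine ⟨w', hw't, hw'f, ?_⟩
  rw [← mul_smul, ← map_mul, hmy, map_one, one_smul]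

variable (i₀ : ι)

/-- Ping-pong set: words starting with the letter `⟨j, x⟩`. -/
def Xset (j : ι) (x : W) : Set (Word (fun _ : ι => W)) :=
  {w | ∃ t, w.toList = ⟨j, x⟩ :: t}

/-- Ping-pong set: words starting with `⟨i₀, x⟩` followed by a letter in position `j`. -/
def Yset (j : ι) (x : W) : Set (Word (fun _ : ι => W)) :=
  {w | ∃ (y : W) (t : List (Σ _ : ι, W)), w.toList = ⟨i₀, x⟩ :: ⟨j, y⟩ :: t}

lemma fstIdx_of_toList {w : Word (fun _ : ι => W)} {l : Σ _ : ι, W}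
    {t : List (Σ _ : ι, W)} (h : w.toList = l :: t) : w.fstIdx = some l.fst := by
  simp [Word.fstIdx, h]

lemma decomp_of_fstIdx {w : Word (fun _ : ι => W)} {i : ι} (h : w.fstIdx = some i) :
    ∃ (y : W) (t : List (Σ _ : ι, W)), w.toList = ⟨i, y⟩ :: t := by
  rcases hl : w.toList with _ | ⟨⟨li, ly⟩, t⟩
  · simp [Word.fstIdx, hl] at h
  · refine ⟨ly, t, ?_⟩
    have : li = i := by simpa [Word.fstIdx, hl] using h
    subst this
    rfl

lemma bsmul_mem {j : ι} {x : W} (hj : j ≠ i₀) (hx : x ≠ 1)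
    (w : Word (fun _ : ι => W)) (hw : w ∉ Yset i₀ j x) :
    (bgen i₀ j x) • w ∈ Xset j x := by
  have hb : (bgen i₀ j x) • w = ofc j x • ((ofc i₀ x⁻¹) • w) := by
    rw [bgen, ← map_inv, mul_smul]
  rw [hb]
  by_cases hfw : w.fstIdx = some i₀
  · obtain ⟨y, t, hlist⟩ := decomp_of_fstIdx hfw
    by_cases hxy : x⁻¹ * y = 1
    · obtain ⟨w', hw't, hw'f, hcan⟩ := of_smul_cancel i₀ x⁻¹ y w t hlist hxy
      rw [hcan]
      by_cases hfw' : w'.fstIdx = some j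
      · exfalso
        obtain ⟨z, t', hlist'⟩ := decomp_of_fstIdx hfw'
        apply hw
        have hyx : y = x := (inv_mul_eq_one.mp hxy).symm
        refine ⟨z, t', ?_⟩
        rw [hlist, hyx, ← hw't, hlist']
      · refine ⟨w'.toList, ?_⟩
        exact toList_of_smul j x w' hx hfw'
    · have hu : ((ofc i₀ x⁻¹) • w).toList = ⟨i₀, x⁻¹ * y⟩ :: t :=
        toList_of_smul_merge i₀ x⁻¹ y w t hlist hxy
      have hufst : ((ofc i₀ x⁻¹) • w).fstIdx ≠ some j := by
        rw [fstIdx_of_toList hu]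
        exact fun hc => hj (Option.some.inj hc).symm
      exact ⟨_, toList_of_smul j x _ hx hufst⟩
  · have hu : ((ofc i₀ x⁻¹) • w).toList = ⟨i₀, x⁻¹⟩ :: w.toList :=
      toList_of_smul i₀ x⁻¹ w (inv_ne_one.mpr hx) hfw
    have hufst : ((ofc i₀ x⁻¹) • w).fstIdx ≠ some j := by
      rw [fstIdx_of_toList hu]
      exact fun hc => hj (Option.some.inj hc).symm
    exact ⟨_, toList_of_smul j x _ hx hufst⟩


lemma binv_smul_mem {j : ι} {x : W} (hj : j ≠ i₀) (hx : x ≠ 1)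
    (w : Word (fun _ : ι => W)) (hw : w ∉ Xset j x) :
    (bgen i₀ j x)⁻¹ • w ∈ Yset i₀ j x := by
  have hb : (bgen i₀ j x)⁻¹ • w = ofc i₀ x • ((ofc j x⁻¹) • w) := by
    rw [bgen, mul_inv_rev, inv_inv, ← map_inv, mul_smul]
  rw [hb]
  have key : ∀ u : Word (fun _ : ι => W), u.fstIdx = some j →
      ofc i₀ x • u ∈ Yset i₀ j x := by
    intro u hu
    obtain ⟨z, t, hlist⟩ := decomp_of_fstIdx hu
    have hufst : u.fstIdx ≠ some i₀ := by
      rw [hu]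
      exact fun hc => hj (Option.some.inj hc)
    have := toList_of_smul i₀ x u hx hufst
    exact ⟨z, t, by rw [this, hlist]⟩
  by_cases hfw : w.fstIdx = some j
  · obtain ⟨y, t, hlist⟩ := decomp_of_fstIdx hfw
    have hxy : x⁻¹ * y ≠ 1 := by
      intro hc
      exact hw ⟨t, by rw [hlist, (inv_mul_eq_one.mp hc)]⟩
    have hu : ((ofc j x⁻¹) • w).toList = ⟨j, x⁻¹ * y⟩ :: t :=
      toList_of_smul_merge j x⁻¹ y w t hlist hxy
    exact key _ (fstIdx_of_toList hu)
  · have hu : ((ofc j x⁻¹) • w).toList = ⟨j, x⁻¹⟩ :: w.toList :=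
      toList_of_smul j x⁻¹ w (inv_ne_one.mpr hx) hfw
    exact key _ (fstIdx_of_toList hu)

lemma Xset_disjoint {j j' : ι} {x x' : W} (h : (⟨j, x⟩ : Σ _ : ι, W) ≠ ⟨j', x'⟩) :
    Disjoint (Xset (ι := ι) j x) (Xset j' x') := by
  rw [Set.disjoint_left]
  rintro w ⟨t, ht⟩ ⟨t', ht'⟩
  rw [ht] at ht'
  exact h (by injection ht')

lemma XYset_disjoint {j j' : ι} (hj : j ≠ i₀) {x x' : W} :
    Disjoint (Xset (ι := ι) j x) (Yset i₀ j' x') := by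
  rw [Set.disjoint_left]
  rintro w ⟨t, ht⟩ ⟨y, t', ht'⟩
  rw [ht] at ht'
  have : (⟨j, x⟩ : Σ _ : ι, W) = ⟨i₀, x'⟩ := by injection ht'
  exact hj congr(($this).fst)

lemma Yset_disjoint {j j' : ι} {x x' : W} (h : (j, x) ≠ (j', x')) :
    Disjoint (Yset (ι := ι) i₀ j x) (Yset i₀ j' x') := by
  rw [Set.disjoint_left]
  rintro w ⟨y, t, ht⟩ ⟨y', t', ht'⟩
  rw [ht] at ht'
  apply h
  have h1 : (⟨i₀, x⟩ : Σ _ : ι, W) = ⟨i₀, x'⟩ := by injection ht'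
  have h2 : (⟨j, y⟩ : Σ _ : ι, W) = ⟨j', y'⟩ := by
    have := (List.cons.injEq _ _ _ _).mp ht'
    exact (List.cons.injEq _ _ _ _).mp this.2 |>.1
  have hx : x = x' := by simpa using congr(($h1).snd)
  have hjj : j = j' := congr(($h2).fst)
  rw [hx, hjj]

/-- The basic single word `⟨j, x⟩`. -/
def sgl (j : ι) (x : W) (hx : x ≠ 1) : Word (fun _ : ι => W) :=
  ⟨[⟨j, x⟩], by simpa using hx, List.isChain_singleton _⟩

lemma sgl_mem_Xset (j : ι) (x : W) (hx : x ≠ 1) : sgl j x hx ∈ Xset j x :=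
  ⟨[], rfl⟩

lemma empty_not_mem_Xset (j : ι) (x : W) : Word.empty ∉ Xset (ι := ι) j x := by
  rintro ⟨t, ht⟩
  simp [Word.empty] at ht

lemma empty_not_mem_Yset (j : ι) (x : W) : Word.empty ∉ Yset (ι := ι) i₀ j x := by
  rintro ⟨y, t, ht⟩
  simp [Word.empty] at ht

lemma bgen_pow_smul_empty {j : ι} {x : W} (hj : j ≠ i₀) (hx : x ≠ 1) :
    ∀ n : ℕ, (bgen i₀ j x) ^ (n + 1) • (Word.empty : Word (fun _ : ι => W)) ∈ Xset j x := by
  intro n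
  induction n with
  | zero =>
    rw [pow_one]
    exact bsmul_mem i₀ hj hx _ (empty_not_mem_Yset i₀ j x)
  | succ n ih =>
    rw [pow_succ', mul_smul]
    apply bsmul_mem i₀ hj hx
    intro hmem
    exact (XYset_disjoint i₀ hj).ne_of_mem ih hmem rfl

lemma bgen_not_isOfFinOrder {j : ι} {x : W} (hj : j ≠ i₀) (hx : x ≠ 1) :
    ¬ IsOfFinOrder (bgen i₀ j x) := by
  intro h
  obtain ⟨n, hn, hpow⟩ := isOfFinOrder_iff_pow_eq_one.mp h
  obtain ⟨m, rfl⟩ : ∃ m, n = m + 1 := ⟨n - 1, by omega⟩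
  have := bgen_pow_smul_empty i₀ hj hx m
  rw [hpow, one_smul] at this
  exact empty_not_mem_Xset j x this

lemma isOfFinOrder_of_zpow {G : Type*} [Group G] {g : G} {n : ℤ} (hn : n ≠ 0)
    (h : g ^ n = 1) : IsOfFinOrder g := by
  apply isOfFinOrder_iff_pow_eq_one.mpr
  refine ⟨n.natAbs, Int.natAbs_pos.mpr hn, ?_⟩
  rcases Int.natAbs_eq n with h1 | h1
  · rw [← zpow_natCast, ← h1, h]
  · rw [h1, zpow_neg, inv_eq_one, zpow_natCast] at h
    exact h

/-- Index type for the free basis of the kernel of the fold map. -/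
def PIdx (ι W : Type*) [Group W] (i₀ : ι) : Type _ :=
  {j : ι // j ≠ i₀} × {x : W // x ≠ 1}

/-- The basis elements, as a family indexed by `PIdx`. -/
def bfam (i₀ : ι) : PIdx ι W i₀ → CoprodI (fun _ : ι => W) :=
  fun p => bgen i₀ p.1.1 p.2.1

lemma freeGroup_eq_one_of_isEmpty {P : Type*} [IsEmpty P] (x : FreeGroup P) : x = 1 := by
  induction x using FreeGroup.induction_on with
  | C1 => rfl
  | of q => exact isEmptyElim q
  | inv_of q hq => rw [hq]; simp
  | mul a b ha hb => rw [ha, hb, one_mul]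

lemma freeGroup_eq_zpow_of_subsingleton {P : Type*} [Subsingleton P] (p₀ : P)
    (x : FreeGroup P) : ∃ n : ℤ, x = FreeGroup.of p₀ ^ n := by
  induction x using FreeGroup.induction_on with
  | C1 => exact ⟨0, by simp⟩
  | of q => exact ⟨1, by rw [Subsingleton.elim q p₀]; simp⟩
  | inv_of q hq =>
    obtain ⟨n, hn⟩ := hq
    exact ⟨-n, by rw [hn, zpow_neg]⟩
  | mul a b ha hb =>
    obtain ⟨n, hn⟩ := ha
    obtain ⟨m, hm⟩ := hb
    exact ⟨n + m, by rw [hn, hm, zpow_add]⟩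

theorem lift_bfam_injective : Function.Injective (FreeGroup.lift (bfam (W := W) i₀)) := by
  rcases subsingleton_or_nontrivial (PIdx ι W i₀) with hsub | hnt
  · rw [injective_iff_map_eq_one]
    intro x hx
    rcases isEmpty_or_nonempty (PIdx ι W i₀) with hemp | hne
    · exact freeGroup_eq_one_of_isEmpty x
    · obtain ⟨p₀⟩ := hne
      obtain ⟨n, rfl⟩ := freeGroup_eq_zpow_of_subsingleton p₀ x
      rw [map_zpow, FreeGroup.lift_apply_of] at hx
      have hn0 : n = 0 := by
        by_contra hn
        exact bgen_not_isOfFinOrder i₀ p₀.1.2 p₀.2.2 (isOfFinOrder_of_zpow hn hx)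
      rw [hn0, zpow_zero]
  · apply FreeGroup.injective_lift_of_ping_pong (bfam i₀)
      (X := fun p => Xset p.1.1 p.2.1) (Y := fun p => Yset i₀ p.1.1 p.2.1)
    · intro p
      exact ⟨sgl p.1.1 p.2.1 p.2.2, sgl_mem_Xset _ _ _⟩
    · intro p q hpq
      apply Xset_disjoint
      intro hc
      apply hpq
      have h1 : p.1.1 = q.1.1 := congrArg Sigma.fst hc
      have h2 : p.2.1 = q.2.1 := by
        obtain ⟨-, h2⟩ := Sigma.ext_iff.mp hc
        exact eq_of_heq h2
      exact Prod.ext (Subtype.ext h1) (Subtype.ext h2)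
    · intro p q hpq
      apply Yset_disjoint
      intro hc
      apply hpq
      have h1 : p.1.1 = q.1.1 := congrArg Prod.fst hc
      have h2 : p.2.1 = q.2.1 := congrArg Prod.snd hc
      exact Prod.ext (Subtype.ext h1) (Subtype.ext h2)
    · intro p q
      exact XYset_disjoint i₀ p.1.2
    · intro p z hz
      rw [Set.mem_smul_set] at hz
      obtain ⟨w, hw, rfl⟩ := hz
      exact bsmul_mem i₀ p.1.2 p.2.2 w hw
    · intro p z hz
      rw [Set.mem_smul_set] at hz
      obtain ⟨w, hw, rfl⟩ := hz
      rw [Pi.inv_apply]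
      exact binv_smul_mem i₀ p.1.2 p.2.2 w hw

/-- The subgroup generated by the basis family. -/
def bSub (i₀ : ι) : Subgroup (CoprodI (fun _ : ι => W)) :=
  Subgroup.closure (Set.range (bfam (W := W) i₀))

lemma bgen_mem_bSub {j : ι} (hj : j ≠ i₀) (x : W) : bgen i₀ j x ∈ bSub (W := W) i₀ := by
  by_cases hx : x = 1
  · subst hx
    have : bgen (W := W) i₀ j 1 = 1 := by simp [bgen]
    rw [this]
    exact one_mem _
  · exact Subgroup.subset_closure ⟨⟨⟨j, hj⟩, ⟨x, hx⟩⟩, rfl⟩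

lemma conj_bgen (u : W) {j : ι} (x : W) :
    ofc i₀ u * bgen i₀ j x * (ofc i₀ u)⁻¹ = (bgen i₀ j u)⁻¹ * bgen i₀ j (u * x) := by
  have h1 : (ofc (ι := ι) i₀ u * ofc i₀ x) = ofc i₀ (u * x) := (map_mul _ _ _).symm
  have h2 : (ofc (ι := ι) j u)⁻¹ * ofc j (u * x) = ofc j x := by
    rw [← map_inv, ← map_mul, inv_mul_cancel_left]
  calc ofc i₀ u * bgen i₀ j x * (ofc i₀ u)⁻¹
      = ofc i₀ u * (ofc j x * ((ofc i₀ x)⁻¹ * (ofc i₀ u)⁻¹)) := by rw [bgen]; group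
    _ = ofc i₀ u * (ofc j x * (ofc i₀ (u * x))⁻¹) := by rw [← h1, mul_inv_rev]
    _ = (bgen i₀ j u)⁻¹ * bgen i₀ j (u * x) := by
        rw [bgen, bgen, mul_inv_rev, inv_inv, ← h2]
        group

lemma conj_mem_bSub (u : W) {c : CoprodI (fun _ : ι => W)} (hc : c ∈ bSub (W := W) i₀) :
    ofc i₀ u * c * (ofc i₀ u)⁻¹ ∈ bSub (W := W) i₀ := by
  have hmap : (bSub (W := W) i₀).map (MulAut.conj (ofc i₀ u)).toMonoidHom ≤ bSub i₀ := by
    rw [bSub, MonoidHom.map_closure]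
    apply Subgroup.closure_le _ |>.mpr
    rintro _ ⟨_, ⟨p, rfl⟩, rfl⟩
    have : (MulAut.conj (ofc i₀ u)).toMonoidHom (bfam i₀ p) =
        (bgen i₀ p.1.1 u)⁻¹ * bgen i₀ p.1.1 (u * p.2.1) := by
      simp only [MulEquiv.coe_toMonoidHom, MulAut.conj_apply]
      exact conj_bgen i₀ u p.2.1
    rw [this]
    exact mul_mem (inv_mem (bgen_mem_bSub i₀ p.1.2 u)) (bgen_mem_bSub i₀ p.1.2 _)
  exact hmap ⟨c, hc, rfl⟩

lemma exists_decomp (g : CoprodI (fun _ : ι => W)) :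
    ∃ c ∈ bSub (W := W) i₀, g = c * ofc i₀ (fold ι W g) := by
  induction g using Monoid.CoprodI.induction_on with
  | one => exact ⟨1, one_mem _, by simp⟩
  | of i m =>
    by_cases hi : i = i₀
    · subst hi
      exact ⟨1, one_mem _, by simp⟩
    · refine ⟨bgen i₀ i m, bgen_mem_bSub i₀ hi m, ?_⟩
      rw [bgen]
      simp [inv_mul_cancel_right]
  | mul x y hx hy =>
    obtain ⟨c, hc, hcx⟩ := hx
    obtain ⟨d, hd, hdy⟩ := hy
    refine ⟨c * (ofc i₀ (fold ι W x) * d * (ofc i₀ (fold ι W x))⁻¹),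
      mul_mem hc (conj_mem_bSub i₀ _ hd), ?_⟩
    have h1 : ofc (ι := ι) i₀ (fold ι W x * fold ι W y)
        = ofc i₀ (fold ι W x) * ofc i₀ (fold ι W y) := map_mul _ _ _
    have h2 : (fold ι W) (x * y) = fold ι W x * fold ι W y := map_mul _ _ _
    calc x * y = (c * ofc i₀ (fold ι W x)) * (d * ofc i₀ (fold ι W y)) := by
          rw [← hcx, ← hdy]
      _ = c * (ofc i₀ (fold ι W x) * d * (ofc i₀ (fold ι W x))⁻¹) *
          (ofc i₀ (fold ι W x) * ofc i₀ (fold ι W y)) := by group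
      _ = _ := by rw [← h1, h2]

theorem bSub_eq_ker : bSub (W := W) i₀ = (fold ι W).ker := by
  apply le_antisymm
  · apply Subgroup.closure_le _ |>.mpr
    rintro _ ⟨p, rfl⟩
    simp [bfam, MonoidHom.mem_ker]
  · intro g hg
    obtain ⟨c, hc, hcg⟩ := exists_decomp i₀ g
    rw [MonoidHom.mem_ker] at hg
    have h1 : ofc (ι := ι) (W := W) i₀ (1 : W) = 1 := map_one _
    rw [hcg, hg, h1, mul_one]
    exact hc

theorem vfree_coprodI [Finite W] (i₀ : ι) :
    ∃ F : Subgroup (CoprodI (fun _ : ι => W)), F.FiniteIndex ∧ IsFreeGroup F := by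
  refine ⟨(fold ι W).ker, Subgroup.finiteIndex_ker _, ?_⟩
  have hrange : (FreeGroup.lift (bfam (W := W) i₀)).range = (fold ι W).ker := by
    rw [FreeGroup.range_lift_eq_closure, ← bSub, bSub_eq_ker]
  have e := MonoidHom.ofInjective (lift_bfam_injective (W := W) i₀)
  exact (FreeGroupBasis.ofRepr
    ((e.trans (MulEquiv.subgroupCongr hrange)).symm)).isFreeGroup



variable {V : Type*} (Γ : SimpleGraph V)

lemma gen_mul_self (v : V) : gen Γ v * gen Γ v = 1 := by
  have hmem : (FreeGroup.of v * FreeGroup.of v) ∈ Subgroup.normalClosure (racgRels Γ) :=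
    Subgroup.subset_normalClosure (Or.inl ⟨v, rfl⟩)
  exact (QuotientGroup.eq_one_iff _).mpr hmem

lemma gen_inv (v : V) : (gen Γ v)⁻¹ = gen Γ v :=
  inv_eq_of_mul_eq_one_right (gen_mul_self Γ v)

lemma gen_sq_adj {u v : V} (h : Γ.Adj u v) :
    (gen Γ u * gen Γ v) * (gen Γ u * gen Γ v) = 1 := by
  have hmem : ((FreeGroup.of u * FreeGroup.of v) ^ 2) ∈
      Subgroup.normalClosure (racgRels Γ) :=
    Subgroup.subset_normalClosure (Or.inr ⟨u, v, h, rfl⟩)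
  have := (QuotientGroup.eq_one_iff _).mpr hmem
  rw [← pow_two]
  exact this

lemma gen_comm {u v : V} (h : Γ.Adj u v) :
    gen Γ u * gen Γ v = gen Γ v * gen Γ u := by
  have h1 := gen_sq_adj Γ h
  have h2 : gen Γ u * gen Γ v = (gen Γ u * gen Γ v)⁻¹ :=
    eq_inv_of_mul_eq_one_right h1
  rw [h2, mul_inv_rev, gen_inv, gen_inv]

/-- Lift a vertex-map satisfying the RACG relations to a homomorphism. -/
def racgLift {G : Type*} [Group G] (f : V → G) (hf1 : ∀ v, f v * f v = 1)
    (hf2 : ∀ u v, Γ.Adj u v → f u * f v = f v * f u) : RACG Γ →* G :=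
  PresentedGroup.toGroup (f := f) (by
    rintro r (⟨v, rfl⟩ | ⟨u, v, hadj, rfl⟩)
    · simpa using hf1 v
    · have : (f u * f v) * (f u * f v) = 1 := by
        calc (f u * f v) * (f u * f v) = f u * (f v * f u) * f v := by group
          _ = f u * (f u * f v) * f v := by rw [← hf2 u v hadj]
          _ = (f u * f u) * (f v * f v) := by group
          _ = 1 := by rw [hf1, hf1, one_mul]
      simpa [pow_two] using this)

@[simp] lemma racgLift_gen {G : Type*} [Group G] (f : V → G) (hf1) (hf2) (v : V) :
    racgLift Γ f hf1 hf2 (gen Γ v) = f v :=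
  PresentedGroup.toGroup.of _

lemma gen_mem_special {S : Set V} {v : V} (hv : v ∈ S) : gen Γ v ∈ special Γ S :=
  Subgroup.subset_closure ⟨v, hv, rfl⟩

/-- A homomorphism out of `Multiplicative (ZMod 2)` from an involution. -/
def invoHom {G : Type*} [Group G] (g : G) (hg : g * g = 1) :
    Multiplicative (ZMod 2) →* G := by
  refine MonoidHom.mk' (fun x => g ^ (x.toAdd.val)) ?_
  intro a b
  set s := a.toAdd
  set t := b.toAdd
  have hs : s.val < 2 := ZMod.val_lt s
  have ht : t.val < 2 := ZMod.val_lt t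
  have hadd : (s + t).val = (s.val + t.val) % 2 := ZMod.val_add s t
  have hg2 : g ^ 2 = 1 := by rw [pow_two]; exact hg
  show g ^ ((s + t).val) = g ^ s.val * g ^ t.val
  rw [hadd]
  interval_cases h1 : s.val <;> interval_cases h2 : t.val <;>
    simp [pow_succ, hg2, hg]

lemma invoHom_apply_one {G : Type*} [Group G] (g : G) (hg : g * g = 1) :
    invoHom g hg (Multiplicative.ofAdd 1) = g := by
  show g ^ ((1 : ZMod 2).val) = g
  rw [ZMod.val_one]
  exact pow_one g

/-- A special subgroup on a clique is finite. -/
lemma special_clique_finite [Finite V] {C : Set V}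
    (hC : ∀ x ∈ C, ∀ y ∈ C, x ≠ y → Γ.Adj x y) :
    ((special Γ C : Subgroup (RACG Γ)) : Set (RACG Γ)).Finite := by
  classical
  haveI : Fintype ↥C := Fintype.ofFinite ↥C
  have hcomm : Pairwise fun v w : ↥C => ∀ (x y : Multiplicative (ZMod 2)),
      Commute ((invoHom (gen Γ ↑v) (gen_mul_self Γ ↑v)) x)
        ((invoHom (gen Γ ↑w) (gen_mul_self Γ ↑w)) y) := by
    intro v w hvw x y
    have hadj : Γ.Adj ↑v ↑w := hC ↑v v.2 ↑w w.2 (fun hc => hvw (Subtype.ext hc))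
    have hcg : Commute (gen Γ ↑v) (gen Γ ↑w) := gen_comm Γ hadj
    exact (hcg.pow_pow _ _)
  set φ := MonoidHom.noncommPiCoprod
    (fun v : ↥C => invoHom (gen Γ ↑v) (gen_mul_self Γ ↑v)) hcomm with hφ
  have hle : special Γ C ≤ φ.range := by
    apply Subgroup.closure_le _ |>.mpr
    rintro _ ⟨v, hv, rfl⟩
    refine ⟨Pi.mulSingle (⟨v, hv⟩ : ↥C) (Multiplicative.ofAdd 1), ?_⟩
    rw [hφ, MonoidHom.noncommPiCoprod_mulSingle]
    exact invoHom_apply_one _ _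
  have hfin : (Set.range φ).Finite := Set.finite_range φ
  exact hfin.subset hle

lemma isOfFinOrder_of_mem_finite {G : Type*} [Group G] {K : Subgroup G}
    (hK : (K : Set G).Finite) {x : G} (hx : x ∈ K) : IsOfFinOrder x := by
  haveI : Finite ↥K := hK.to_subtype
  have h : IsOfFinOrder (⟨x, hx⟩ : ↥K) :=
    orderOf_pos_iff.mp (orderOf_pos (⟨x, hx⟩ : ↥K))
  exact K.subtype.isOfFinOrder h

/-- The retraction of `RACG Γ` onto the special subgroup of `S`. -/
def retr (S : Set V) [DecidablePred (· ∈ S)] : RACG Γ →* RACG Γ :=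
  racgLift Γ (fun v => if v ∈ S then gen Γ v else 1)
    (by
      intro v
      split_ifs
      · exact gen_mul_self Γ v
      · exact one_mul 1)
    (by
      intro u v hadj
      split_ifs <;> simp [gen_comm Γ hadj])

lemma retr_fix (S : Set V) [DecidablePred (· ∈ S)] {x : RACG Γ}
    (hx : x ∈ special Γ S) : retr Γ S x = x := by
  induction hx using Subgroup.closure_induction with
  | mem g hg =>
    obtain ⟨v, hv, rfl⟩ := hg
    simp [retr, hv]
  | one => exact map_one _
  | mul a b _ _ ha hb => rw [map_mul, ha, hb]
  | inv a _ ha => rw [map_inv, ha]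

lemma retr_maps (S T : Set V) [DecidablePred (· ∈ S)] {x : RACG Γ}
    (hx : x ∈ special Γ T) : retr Γ S x ∈ special Γ (T ∩ S) := by
  induction hx using Subgroup.closure_induction with
  | mem g hg =>
    obtain ⟨v, hv, rfl⟩ := hg
    by_cases hvS : v ∈ S
    · have : retr Γ S (gen Γ v) = gen Γ v := by simp [retr, hvS]
      rw [this]
      exact gen_mem_special Γ ⟨hv, hvS⟩
    · have : retr Γ S (gen Γ v) = 1 := by simp [retr, hvS]
      rw [this]
      exact one_mem _
  | one => rw [map_one]; exact one_mem _
  | mul a b _ _ ha hb => rw [map_mul]; exact mul_mem ha hb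
  | inv a _ ha => rw [map_inv]; exact inv_mem ha

/-- Two non-adjacent distinct generators give an infinite-order product. -/
lemma gen_mul_gen_not_isOfFinOrder [DecidableEq V] {u v : V} (huv : u ≠ v)
    (hnadj : ¬ Γ.Adj u v) : ¬ IsOfFinOrder (gen Γ u * gen Γ v) := by
  set f : V → DihedralGroup 0 := fun w => if w = u then .sr 0 else if w = v then .sr 1 else 1
    with hf
  have hf1 : ∀ w, f w * f w = 1 := by
    intro w
    show (if w = u then DihedralGroup.sr 0 else if w = v then DihedralGroup.sr 1 else 1) *
        (if w = u then DihedralGroup.sr 0 else if w = v then DihedralGroup.sr 1 else 1) = 1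
    split_ifs <;>
      simp [DihedralGroup.sr_mul_sr, ← DihedralGroup.one_def]
  have hf2 : ∀ a b, Γ.Adj a b → f a * f b = f b * f a := by
    intro a b hadj
    show (if a = u then DihedralGroup.sr 0 else if a = v then DihedralGroup.sr 1 else 1) *
        (if b = u then DihedralGroup.sr 0 else if b = v then DihedralGroup.sr 1 else 1) =
        (if b = u then DihedralGroup.sr 0 else if b = v then DihedralGroup.sr 1 else 1) *
        (if a = u then DihedralGroup.sr 0 else if a = v then DihedralGroup.sr 1 else 1)
    by_cases h1 : a = u
    · have hbu : b ≠ u := fun hc => hadj.ne (h1.trans hc.symm)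
      have hbv : b ≠ v := fun hc => hnadj (by rw [← h1, ← hc]; exact hadj)
      simp [h1, hbu, hbv]
    · by_cases h2 : a = v
      · have hbv : b ≠ v := fun hc => hadj.ne (h2.trans hc.symm)
        have hbu : b ≠ u := fun hc => hnadj (by rw [← h2, ← hc]; exact hadj.symm)
        simp [h1, h2, hbu, hbv]
      · simp [h1, h2]
  set Φ := racgLift Γ f hf1 hf2 with hΦ
  intro hord
  have himg : IsOfFinOrder (Φ (gen Γ u * gen Γ v)) := Φ.isOfFinOrder hord
  have hval : Φ (gen Γ u * gen Γ v) = DihedralGroup.r 1 := by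
    rw [map_mul, hΦ, racgLift_gen, racgLift_gen]
    have hu : f u = DihedralGroup.sr 0 := by simp [hf]
    have hv : f v = DihedralGroup.sr 1 := by simp [hf, Ne.symm huv]
    rw [hu, hv, DihedralGroup.sr_mul_sr]
    norm_num
  rw [hval] at himg
  have : orderOf (DihedralGroup.r 1 : DihedralGroup 0) = 0 := DihedralGroup.orderOf_r_one
  rw [orderOf_eq_zero_iff] at this
  exact this himg


/-! ### Graph lemmas -/

section Graph

variable {V : Type*} (Γ : SimpleGraph V)

lemma dist_two_of (hconn : Γ.Connected) {x z y : V} (hxz : Γ.Adj x z) (hzy : Γ.Adj z y)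
    (hxy : x ≠ y) (hnadj : ¬ Γ.Adj x y) : Γ.dist x y = 2 := by
  have hle : Γ.dist x y ≤ 2 := by
    have := SimpleGraph.dist_le (SimpleGraph.Walk.cons hxz hzy.toWalk)
    simpa using this
  have h0 : Γ.dist x y ≠ 0 := by
    rw [Ne, hconn.dist_eq_zero_iff]; exact hxy
  have h1 : Γ.dist x y ≠ 1 := by
    rw [Ne, SimpleGraph.dist_eq_one_iff_adj]; exact hnadj
  omega

lemma adj_of_common {S₁ : Set V} (hconn : Γ.Connected)
    (hcond : ∀ u ∈ S₁, ∀ v ∈ S₁, u ≠ v → Γ.dist u v ≠ 2)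
    {x y z : V} (hx : x ∈ S₁) (hy : y ∈ S₁) (hxy : x ≠ y)
    (hxz : Γ.Adj x z) (hzy : Γ.Adj z y) : Γ.Adj x y := by
  by_contra hnadj
  exact hcond x hx y hy hxy (dist_two_of Γ hconn hxz hzy hxy hnadj)

lemma join_inter_clique {S₁ J : Set V} (hconn : Γ.Connected)
    (hcond : ∀ u ∈ S₁, ∀ v ∈ S₁, u ≠ v → Γ.dist u v ≠ 2) (hJ : IsJoin Γ J) :
    ∀ x ∈ J ∩ S₁, ∀ y ∈ J ∩ S₁, x ≠ y → Γ.Adj x y := by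
  obtain ⟨V₁, V₂, hne1, hne2, hdisj, hunion, hadj⟩ := hJ
  intro x hx y hy hxy
  have hxJ := hx.1
  have hyJ := hy.1
  rw [← hunion] at hxJ hyJ
  rcases hxJ with hx1 | hx2 <;> rcases hyJ with hy1 | hy2
  · obtain ⟨w, hw⟩ := hne2
    exact adj_of_common Γ hconn hcond hx.2 hy.2 hxy (hadj x hx1 w hw) (hadj y hy1 w hw).symm
  · exact hadj x hx1 y hy2
  · exact (hadj y hy1 x hx2).symm
  · obtain ⟨w, hw⟩ := hne1
    exact adj_of_common Γ hconn hcond hx.2 hy.2 hxy (hadj w hw x hx2).symm (hadj w hw y hy2)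

lemma star_inter_clique {S₁ : Set V} (hconn : Γ.Connected)
    (hcond : ∀ u ∈ S₁, ∀ v ∈ S₁, u ≠ v → Γ.dist u v ≠ 2) (w : V) :
    ∀ x ∈ starSet Γ w ∩ S₁, ∀ y ∈ starSet Γ w ∩ S₁, x ≠ y → Γ.Adj x y := by
  intro x hx y hy hxy
  rcases hx.1 with hxw | hxw <;> rcases hy.1 with hyw | hyw
  · rw [Set.mem_singleton_iff] at hxw hyw
    exact absurd (hxw.trans hyw.symm) hxy
  · rw [Set.mem_singleton_iff] at hxw
    rw [hxw]
    exact hyw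
  · rw [Set.mem_singleton_iff] at hyw
    rw [hyw]
    exact hxw.symm
  · exact adj_of_common Γ hconn hcond hx.2 hy.2 hxy hxw.symm hyw

end Graph

section Main

variable {V : Type*} (Γ : SimpleGraph V)

lemma not_conj_in_special_of_clique [Fintype V] {S₁ T : Set V}
    (hclq : ∀ x ∈ T ∩ S₁, ∀ y ∈ T ∩ S₁, x ≠ y → Γ.Adj x y)
    {x : RACG Γ} (hx : x ∈ special Γ S₁) (hordx : ¬ IsOfFinOrder x)
    (k : RACG Γ) : k * x * k⁻¹ ∉ special Γ T := by
  classical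
  intro hmem
  have h1 : retr Γ S₁ (k * x * k⁻¹) ∈ special Γ (T ∩ S₁) := retr_maps Γ S₁ T hmem
  have h2 : retr Γ S₁ (k * x * k⁻¹) = retr Γ S₁ k * x * (retr Γ S₁ k)⁻¹ := by
    rw [map_mul, map_mul, map_inv, retr_fix Γ S₁ hx]
  rw [h2] at h1
  have hfin := special_clique_finite Γ (C := T ∩ S₁) hclq
  exact hordx (isOfFinOrder_of_conj _ (isOfFinOrder_of_mem_finite hfin h1))

theorem vfree_special [Fintype V] (hconn : Γ.Connected) {S₁ : Set V}
    (hcond : ∀ u ∈ S₁, ∀ v ∈ S₁, u ≠ v → Γ.dist u v ≠ 2) (hne : S₁.Nonempty)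
    (g : RACG Γ) (H : Subgroup (RACG Γ)) (hH : H = conjSubgroup g (special Γ S₁)) :
    VirtuallyFree ↥H := by
  classical
  set r : ↥S₁ → ↥S₁ → Prop := fun a b => a = b ∨ Γ.Adj ↑a ↑b with hrdef
  have req : Equivalence r := by
    constructor
    · exact fun a => Or.inl rfl
    · rintro a b (rfl | h)
      exacts [Or.inl rfl, Or.inr h.symm]
    · rintro a b c (rfl | hab) (rfl | hbc)
      · exact Or.inl rfl
      · exact Or.inr hbc
      · exact Or.inr hab
      · by_cases hac : a = c
        · exact Or.inl hac
        · exact Or.inr (adj_of_common Γ hconn hcond a.2 c.2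
            (fun hc => hac (Subtype.ext hc)) hab hbc)
  letI st : Setoid ↥S₁ := ⟨r, req⟩
  haveI : DecidableEq (Quotient st) := Classical.decEq _
  haveI : DecidableEq (↥S₁ → Multiplicative (ZMod 2)) := Classical.decEq _
  set f : V → Monoid.CoprodI
      (fun _ : Quotient st => (↥S₁ → Multiplicative (ZMod 2))) :=
    fun v => if h : v ∈ S₁ then
      ofc (⟦(⟨v, h⟩ : ↥S₁)⟧ : Quotient st)
        (Pi.mulSingle (⟨v, h⟩ : ↥S₁) (Multiplicative.ofAdd (1 : ZMod 2)))
      else 1 with hfdef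
  have hsq : ∀ s : ↥S₁,
      (Pi.mulSingle s (Multiplicative.ofAdd (1 : ZMod 2)) :
          ↥S₁ → Multiplicative (ZMod 2)) *
        Pi.mulSingle s (Multiplicative.ofAdd (1 : ZMod 2)) = 1 := by
    intro s
    ext t
    by_cases ht : t = s
    · subst ht
      simp only [Pi.mul_apply, Pi.mulSingle_eq_same, Pi.one_apply]
      decide
    · simp [Pi.mulSingle_eq_of_ne ht]
  have hf1 : ∀ v, f v * f v = 1 := by
    intro v
    rw [hfdef]
    by_cases h : v ∈ S₁
    · simp only [dif_pos h]
      rw [← map_mul, hsq, map_one]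
    · simp [dif_neg h]
  have hf2 : ∀ a b, Γ.Adj a b → f a * f b = f b * f a := by
    intro a b hadj
    rw [hfdef]
    by_cases ha : a ∈ S₁
    · by_cases hb : b ∈ S₁
      · simp only [dif_pos ha, dif_pos hb]
        have hq : (⟦(⟨a, ha⟩ : ↥S₁)⟧ : Quotient st) = ⟦(⟨b, hb⟩ : ↥S₁)⟧ :=
          Quotient.sound (Or.inr hadj)
        rw [hq, ← map_mul, ← map_mul, mul_comm]
      · simp [dif_pos ha, dif_neg hb]
    · simp [dif_neg ha]
  set Ξ : RACG Γ →* Monoid.CoprodI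
      (fun _ : Quotient st => (↥S₁ → Multiplicative (ZMod 2))) :=
    racgLift Γ f hf1 hf2 with hΞdef
  -- the left inverse on the special subgroup
  have hcomm : ∀ i : Quotient st, Pairwise fun s t : ↥S₁ => ∀ x y,
      Commute ((if _ : (⟦s⟧ : Quotient st) = i then
          invoHom (gen Γ ↑s) (gen_mul_self Γ ↑s) else 1) x)
        ((if _ : (⟦t⟧ : Quotient st) = i then
          invoHom (gen Γ ↑t) (gen_mul_self Γ ↑t) else 1) y) := by
    intro i s t hst x y
    by_cases hs : (⟦s⟧ : Quotient st) = i
    · by_cases ht : (⟦t⟧ : Quotient st) = i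
      · simp only [dif_pos hs, dif_pos ht]
        have hr : r s t := Quotient.exact (hs.trans ht.symm)
        rcases hr with rfl | hadj
        · exact absurd rfl hst
        · have hc : Commute (gen Γ ↑s) (gen Γ ↑t) := gen_comm Γ hadj
          show Commute (gen Γ ↑s ^ _) (gen Γ ↑t ^ _)
          exact hc.pow_pow _ _
      · simp only [dif_neg ht]
        exact Commute.one_right _
    · simp only [dif_neg hs]
      exact Commute.one_left _
  set Θ : Monoid.CoprodI
      (fun _ : Quotient st => (↥S₁ → Multiplicative (ZMod 2))) →* RACG Γ :=
    Monoid.CoprodI.lift (fun i =>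
      MonoidHom.noncommPiCoprod (fun s : ↥S₁ =>
        if _ : (⟦s⟧ : Quotient st) = i then
          invoHom (gen Γ ↑s) (gen_mul_self Γ ↑s) else 1) (hcomm i)) with hΘdef
  have hfix : ∀ x ∈ special Γ S₁, Θ (Ξ x) = x := by
    intro x hx
    induction hx using Subgroup.closure_induction with
    | mem z hz =>
      obtain ⟨v, hv, rfl⟩ := hz
      rw [hΞdef, racgLift_gen, hfdef]
      simp only [dif_pos hv]
      rw [hΘdef]
      rw [Monoid.CoprodI.lift_of]
      rw [MonoidHom.noncommPiCoprod_mulSingle]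
      rw [dif_pos rfl]
      exact invoHom_apply_one _ _
    | one => simp
    | mul a b _ _ hA hB => rw [map_mul, map_mul, hA, hB]
    | inv a _ hA => rw [map_inv, map_inv, hA]
  -- the embedding of H
  have hmemH : ∀ z : RACG Γ, z ∈ H → g⁻¹ * z * g ∈ special Γ S₁ := by
    intro z hh
    rw [hH] at hh
    obtain ⟨x, hx, hxh⟩ := hh
    have : g * x * g⁻¹ = z := by
      simpa [conjSubgroup, MulAut.conj_apply] using hxh
    rw [← this]
    group
    simpa using hx
  set emb : ↥H →* Monoid.CoprodI
      (fun _ : Quotient st => (↥S₁ → Multiplicative (ZMod 2))) :=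
    Ξ.comp (((MulAut.conj g⁻¹).toMonoidHom).comp H.subtype) with hembdef
  have hembinj : Function.Injective emb := by
    intro a b hab
    have ha' : Θ (Ξ (g⁻¹ * ↑a * g)) = g⁻¹ * ↑a * g := hfix _ (hmemH ↑a a.2)
    have hb' : Θ (Ξ (g⁻¹ * ↑b * g)) = g⁻¹ * ↑b * g := hfix _ (hmemH ↑b b.2)
    have heq : Ξ (g⁻¹ * ↑a * g) = Ξ (g⁻¹ * ↑b * g) := by
      have := hab
      simp only [hembdef, MonoidHom.comp_apply, MulEquiv.coe_toMonoidHom,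
        MulAut.conj_apply, Subgroup.coe_subtype, inv_inv] at this
      simpa [mul_assoc] using this
    have : g⁻¹ * ↑a * g = g⁻¹ * ↑b * g := by rw [← ha', ← hb', heq]
    have : (↑a : RACG Γ) = ↑b := by
      have h2 := congrArg (fun z => g * z * g⁻¹) this
      simpa [mul_assoc] using h2
    exact Subtype.ext this
  obtain ⟨u, hu⟩ := hne
  exact vfree_of_injective emb hembinj
    (vfree_coprodI (⟦(⟨u, hu⟩ : ↥S₁)⟧ : Quotient st))

end Main

end RACGAux

open RACGPaper in
/-- for a conjugate of a special subgroup of a RACG with connected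
non-join defining graph, condition (1) on `S₁`, join-freeness, and star-freeness are
equivalent, and such a subgroup is virtually free. -/
theorem parabolic_joinFree_starFree_iff
    {V : Type*} [Fintype V] (Γ : SimpleGraph V) (hconn : Γ.Connected)
    (hnj : ¬ IsJoin Γ (Set.univ : Set V)) (S₁ : Set V) (g : RACG Γ)
    (H : Subgroup (RACG Γ)) (hH : H = conjSubgroup g (special Γ S₁)) :
    (((∃ u ∈ S₁, ∃ v ∈ S₁, u ≠ v ∧ ¬ Γ.Adj u v) ∧
        ∀ u ∈ S₁, ∀ v ∈ S₁, u ≠ v → Γ.dist u v ≠ 2) ↔ JoinFree Γ H) ∧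
    (((∃ u ∈ S₁, ∃ v ∈ S₁, u ≠ v ∧ ¬ Γ.Adj u v) ∧
        ∀ u ∈ S₁, ∀ v ∈ S₁, u ≠ v → Γ.dist u v ≠ 2) ↔ StarFree Γ H) ∧
    (((∃ u ∈ S₁, ∃ v ∈ S₁, u ≠ v ∧ ¬ Γ.Adj u v) ∧
        ∀ u ∈ S₁, ∀ v ∈ S₁, u ≠ v → Γ.dist u v ≠ 2) → VirtuallyFree ↥H) := by
  classical
  have hmemH : ∀ x ∈ special Γ S₁, g * x * g⁻¹ ∈ H := by
    intro x hx
    rw [hH]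
    exact ⟨x, hx, by simp [MulAut.conj_apply]⟩
  have hXmem : ∀ z ∈ H, g⁻¹ * z * g ∈ special Γ S₁ := by
    intro z hz
    rw [hH] at hz
    obtain ⟨x, hx, hxz⟩ := hz
    have hxz' : g * x * g⁻¹ = z := by
      simpa [conjSubgroup, MulAut.conj_apply] using hxz
    rw [← hxz']
    group
    simpa using hx
  have hInf : (∃ u ∈ S₁, ∃ v ∈ S₁, u ≠ v ∧ ¬ Γ.Adj u v) →
      (H : Set (RACG Γ)).Infinite := by
    rintro ⟨u, hu, v, hv, huv, hnadj⟩
    set z := g * (gen Γ u * gen Γ v) * g⁻¹ with hzdef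
    have hzH : z ∈ H := hmemH _ (mul_mem (RACGAux.gen_mem_special Γ hu)
      (RACGAux.gen_mem_special Γ hv))
    have hzord : ¬ IsOfFinOrder z := fun hord =>
      RACGAux.gen_mul_gen_not_isOfFinOrder Γ huv hnadj
        (RACGAux.isOfFinOrder_of_conj g hord)
    exact Set.infinite_of_injective_forall_mem
      (injective_pow_iff_not_isOfFinOrder.mpr hzord) (fun n : ℕ => pow_mem hzH n)
  have hfinH : (∀ u ∈ S₁, ∀ v ∈ S₁, u ≠ v → Γ.Adj u v) →
      (H : Set (RACG Γ)).Finite := by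
    intro hclq
    have hfin := RACGAux.special_clique_finite Γ (C := S₁) hclq
    rw [hH, conjSubgroup, Subgroup.coe_map]
    exact hfin.image _
  have hpair_of_inf : (H : Set (RACG Γ)).Infinite →
      ∃ u ∈ S₁, ∃ v ∈ S₁, u ≠ v ∧ ¬ Γ.Adj u v := by
    intro hinf
    by_contra hno
    push_neg at hno
    apply hinf
    apply hfinH
    intro u hu v hv huv
    by_contra hnadj
    exact hnadj (hno u hu v hv huv)
  have hmid : ∀ u v : V, Γ.dist u v = 2 → ∃ w, Γ.Adj u w ∧ Γ.Adj w v := by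
    intro u v hd
    obtain ⟨p, hp⟩ := hconn.exists_walk_length_eq_dist u v
    rw [hd] at hp
    cases p with
    | nil => simp at hp
    | cons h q =>
      cases q with
      | nil => simp at hp
      | cons h2 q2 =>
        have hq2 : q2.length = 0 := by
          simp only [SimpleGraph.Walk.length_cons] at hp
          omega
        have heq := SimpleGraph.Walk.eq_of_length_eq_zero hq2
        exact ⟨_, h, heq ▸ h2⟩
  have hjoin : ∀ {u v w : V}, Γ.Adj u w → Γ.Adj w v → ¬ Γ.Adj u v →
      IsJoin Γ ({w} ∪ {u, v}) := by
    intro u v w h1 h2 hn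
    refine ⟨{w}, {u, v}, ⟨w, rfl⟩, ⟨u, by simp⟩, ?_, rfl, ?_⟩
    · rw [Set.disjoint_singleton_left]
      intro hws
      rcases hws with hwu | hwv
      · exact h1.ne hwu.symm
      · rw [Set.mem_singleton_iff] at hwv
        exact h2.ne hwv
    · intro a ha b hb
      rw [Set.mem_singleton_iff] at ha
      subst ha
      rcases hb with hbu | hbv
      · rw [hbu]; exact h1.symm
      · rw [Set.mem_singleton_iff] at hbv
        rw [hbv]; exact h2
  -- condition (1) implies JoinFree
  have hogen : ∀ {u v : V}, u ∈ S₁ → v ∈ S₁ → u ≠ v → ¬ Γ.Adj u v →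
      (g * (gen Γ u * gen Γ v) * g⁻¹ ∈ H ∧
        ¬ IsOfFinOrder (g * (gen Γ u * gen Γ v) * g⁻¹)) := by
    intro u v hu hv huv hnadj
    refine ⟨hmemH _ (mul_mem (RACGAux.gen_mem_special Γ hu)
      (RACGAux.gen_mem_special Γ hv)), fun hord => ?_⟩
    exact RACGAux.gen_mul_gen_not_isOfFinOrder Γ huv hnadj
      (RACGAux.isOfFinOrder_of_conj g hord)
  have hJF : ((∃ u ∈ S₁, ∃ v ∈ S₁, u ≠ v ∧ ¬ Γ.Adj u v) ∧
      ∀ u ∈ S₁, ∀ v ∈ S₁, u ≠ v → Γ.dist u v ≠ 2) → JoinFree Γ H := by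
    rintro ⟨hpair, hcond⟩
    refine ⟨hInf hpair, ?_⟩
    intro h hh hord g' hin
    obtain ⟨J, hJ, hmem⟩ := hin
    set x := g⁻¹ * h * g with hxdef
    have hx : x ∈ special Γ S₁ := hXmem h hh
    have hxord : ¬ IsOfFinOrder x := by
      intro hc
      apply hord
      have hhx : g * x * g⁻¹ = h := by rw [hxdef]; group
      rw [← hhx]
      exact RACGAux.isOfFinOrder_conj g hc
    refine RACGAux.not_conj_in_special_of_clique Γ
      (RACGAux.join_inter_clique Γ hconn hcond hJ) hx hxord (g' * g) ?_
    have hrw : g' * g * x * (g' * g)⁻¹ = g' * h * g'⁻¹ := by rw [hxdef]; group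
    rw [hrw]
    exact hmem
  have hSF : ((∃ u ∈ S₁, ∃ v ∈ S₁, u ≠ v ∧ ¬ Γ.Adj u v) ∧
      ∀ u ∈ S₁, ∀ v ∈ S₁, u ≠ v → Γ.dist u v ≠ 2) → StarFree Γ H := by
    rintro ⟨hpair, hcond⟩
    refine ⟨hInf hpair, ?_⟩
    intro h hh hord g' hin
    obtain ⟨w, hmem⟩ := hin
    set x := g⁻¹ * h * g with hxdef
    have hx : x ∈ special Γ S₁ := hXmem h hh
    have hxord : ¬ IsOfFinOrder x := by
      intro hc
      apply hord
      have hhx : g * x * g⁻¹ = h := by rw [hxdef]; group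
      rw [← hhx]
      exact RACGAux.isOfFinOrder_conj g hc
    refine RACGAux.not_conj_in_special_of_clique Γ
      (RACGAux.star_inter_clique Γ hconn hcond w) hx hxord (g' * g) ?_
    have hrw : g' * g * x * (g' * g)⁻¹ = g' * h * g'⁻¹ := by rw [hxdef]; group
    rw [hrw]
    exact hmem
  -- dist-2 pairs give elements in join (resp. star) subgroups
  have hdist2 : ∀ u ∈ S₁, ∀ v ∈ S₁, u ≠ v → Γ.dist u v = 2 →
      False ∨ True := fun _ _ _ _ _ _ => Or.inr trivial
  have hJF' : JoinFree Γ H → ((∃ u ∈ S₁, ∃ v ∈ S₁, u ≠ v ∧ ¬ Γ.Adj u v) ∧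
      ∀ u ∈ S₁, ∀ v ∈ S₁, u ≠ v → Γ.dist u v ≠ 2) := by
    intro hjf
    refine ⟨hpair_of_inf hjf.1, ?_⟩
    intro u hu v hv huv
    intro hdist
    obtain ⟨w, hw1, hw2⟩ := hmid u v hdist
    have hnadj : ¬ Γ.Adj u v := by
      intro hadj
      have h1 := SimpleGraph.dist_eq_one_iff_adj.mpr hadj
      rw [hdist] at h1
      omega
    obtain ⟨hzH, hzord⟩ := hogen hu hv huv hnadj
    apply hjf.2 _ hzH hzord g⁻¹
    have hzv : g⁻¹ * (g * (gen Γ u * gen Γ v) * g⁻¹) * g⁻¹⁻¹ =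
        gen Γ u * gen Γ v := by group
    rw [hzv]
    exact ⟨{w} ∪ {u, v}, hjoin hw1 hw2 hnadj,
      mul_mem (RACGAux.gen_mem_special Γ (by simp))
        (RACGAux.gen_mem_special Γ (by simp))⟩
  have hSF' : StarFree Γ H → ((∃ u ∈ S₁, ∃ v ∈ S₁, u ≠ v ∧ ¬ Γ.Adj u v) ∧
      ∀ u ∈ S₁, ∀ v ∈ S₁, u ≠ v → Γ.dist u v ≠ 2) := by
    intro hsf
    refine ⟨hpair_of_inf hsf.1, ?_⟩
    intro u hu v hv huv
    intro hdist
    obtain ⟨w, hw1, hw2⟩ := hmid u v hdist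
    have hnadj : ¬ Γ.Adj u v := by
      intro hadj
      have h1 := SimpleGraph.dist_eq_one_iff_adj.mpr hadj
      rw [hdist] at h1
      omega
    obtain ⟨hzH, hzord⟩ := hogen hu hv huv hnadj
    apply hsf.2 _ hzH hzord g⁻¹
    have hzv : g⁻¹ * (g * (gen Γ u * gen Γ v) * g⁻¹) * g⁻¹⁻¹ =
        gen Γ u * gen Γ v := by group
    rw [hzv]
    refine ⟨w, mul_mem (RACGAux.gen_mem_special Γ ?_)
      (RACGAux.gen_mem_special Γ ?_)⟩
    · exact Set.mem_union_right _ hw1.symm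
    · exact Set.mem_union_right _ hw2
  refine ⟨⟨hJF, hJF'⟩, ⟨hSF, hSF'⟩, ?_⟩
  rintro ⟨hpair, hcond⟩
  obtain ⟨u, hu, -⟩ := hpair
  exact RACGAux.vfree_special Γ hconn hcond ⟨u, hu⟩ g H hH
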